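/- Let G be the graph on the 21 vertices {x_i, y_i, z_i : i ∈ ℤ/7ℤ} with edges {x_i, x_{i+1}}, {x_i, y_i}, {y_i, z_i}, {z_i, y_{i+1}}, {z_i, z_{i+3}} (indices modulo 7), and set X = {x_i}, Y = {y_i}, Z = {z_i}. Then every cycle of G of length 5 contains at least one vertex of X and at least one vertex of Z; consequently, every 5-cycle of G contains at least two vertices of Y. -/

import Mathlib

variable {V : Type*}

/-- A stable (independent) set of a graph. -/
def IsStableSet (G : SimpleGraph V) (S : Set V) : Prop :=
  ∀ u ∈ S, ∀ v ∈ S, ¬ G.Adj u v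

/-- The vertex set of a cycle subgraph of `G`, given by an injective
parametrization `c : ZMod m → V` (`m ≥ 3`) with consecutive vertices adjacent. -/
def IsCycleSet (G : SimpleGraph V) (C : Set V) : Prop :=
  ∃ (m : ℕ) (c : ZMod m → V), 3 ≤ m ∧ Function.Injective c ∧
    (∀ i, G.Adj (c i) (c (i + 1))) ∧ C = Set.range c

/-- The vertex set of an odd cycle subgraph of `G`. -/
def IsOddCycleSet (G : SimpleGraph V) (C : Set V) : Prop :=
  ∃ (m : ℕ) (c : ZMod m → V), 3 ≤ m ∧ Odd m ∧ Function.Injective c ∧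
    (∀ i, G.Adj (c i) (c (i + 1))) ∧ C = Set.range c

/-- The vertex set of a chordless odd cycle subgraph of `G`: the only edges of `G`
between vertices of the cycle are the cycle edges. -/
def IsChordlessOddCycleSet (G : SimpleGraph V) (C : Set V) : Prop :=
  ∃ (m : ℕ) (c : ZMod m → V), 3 ≤ m ∧ Odd m ∧ Function.Injective c ∧
    (∀ i, G.Adj (c i) (c (i + 1))) ∧
    (∀ i j, G.Adj (c i) (c j) → j = i + 1 ∨ i = j + 1) ∧
    C = Set.range c

/-- A maximal clique of `G`. -/
def IsMaximalClique (G : SimpleGraph V) (K : Set V) : Prop :=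
  G.IsClique K ∧ ∀ K' : Set V, G.IsClique K' → K ⊆ K' → K = K'

/-- Membership in HSTAB(G). -/
def memHSTAB (G : SimpleGraph V) (f : V → ℝ) : Prop :=
  (∀ x, 0 ≤ f x) ∧
  (∀ K : Set V, G.IsClique K → (∑ᶠ v ∈ K, f v) ≤ 1) ∧
  (∀ C : Set V, IsOddCycleSet G C → (∑ᶠ v ∈ C, f v) ≤ ((C.ncard : ℝ) - 1) / 2)

/-- Membership in TSTAB(G). -/
def memTSTAB (G : SimpleGraph V) (f : V → ℝ) : Prop :=
  (∀ x, 0 ≤ f x ∧ f x ≤ 1) ∧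
  (∀ x y, G.Adj x y → f x + f y ≤ 1) ∧
  (∀ C : Set V, IsOddCycleSet G C → (∑ᶠ v ∈ C, f v) ≤ ((C.ncard : ℝ) - 1) / 2)

/-- Membership in QSTAB(G). -/
def memQSTAB (G : SimpleGraph V) (f : V → ℝ) : Prop :=
  (∀ x, 0 ≤ f x) ∧
  (∀ K : Set V, G.IsClique K → (∑ᶠ v ∈ K, f v) ≤ 1)

/-- The stable set polytope STAB(G). -/
def STAB (G : SimpleGraph V) : Set (V → ℝ) :=
  convexHull ℝ {f : V → ℝ | ∃ S : Set V, IsStableSet G S ∧ f = S.indicator 1}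

/-- The set `U^(n)` of the paper, as a predicate on pairs `(g, d)`. -/
def memU (G : SimpleGraph V) (n : ℤ) (g : V → ℤ) (d : ℤ) : Prop :=
  (∀ v, n ≤ g v) ∧
  (∀ K : Set V, IsMaximalClique G K → (∑ᶠ v ∈ K, g v) ≤ d - n) ∧
  (∀ C : Set V, IsChordlessOddCycleSet G C → 5 ≤ C.ncard →
    2 * (∑ᶠ v ∈ C, g v) ≤ d * ((C.ncard : ℤ) - 1) - 2 * n)
/-- The 21 vertices `x_i, y_i, z_i`, `i ∈ ℤ/7ℤ`. -/
inductive Vtx : Type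
  | x : ZMod 7 → Vtx
  | y : ZMod 7 → Vtx
  | z : ZMod 7 → Vtx
  deriving DecidableEq, Fintype

/-- The oriented edge relation of the example graph. -/
def paperRel : Vtx → Vtx → Prop := fun u v =>
  (∃ i, u = Vtx.x i ∧ v = Vtx.x (i + 1)) ∨
  (∃ i, u = Vtx.x i ∧ v = Vtx.y i) ∨
  (∃ i, u = Vtx.y i ∧ v = Vtx.z i) ∨
  (∃ i, u = Vtx.z i ∧ v = Vtx.y (i + 1)) ∨
  (∃ i, u = Vtx.z i ∧ v = Vtx.z (i + 3))

instance : DecidableRel paperRel := fun u v => by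
  unfold paperRel; infer_instance

/-- The example graph of the paper. -/
def paperGraph : SimpleGraph Vtx where
  Adj u v := paperRel u v ∨ paperRel v u
  symm := ⟨fun _ _ h => Or.symm h⟩
  loopless := ⟨by
    show ∀ a, ¬(paperRel a a ∨ paperRel a a)
    decide⟩

/-- The set `X = {x_i}`. -/
def Xset : Set Vtx := Set.range Vtx.x
/-- The set `Y = {y_i}`. -/
def Yset : Set Vtx := Set.range Vtx.y
/-- The set `Z = {z_i}`. -/
def Zset : Set Vtx := Set.range Vtx.z


instance : DecidableRel paperGraph.Adj := fun u v =>
  inferInstanceAs (Decidable (paperRel u v ∨ paperRel v u))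

/-- Explicit neighbor lists for the example graph. -/
def nbrs : Vtx → List Vtx
  | .x i => [.x (i + 1), .x (i + 6), .y i]
  | .y i => [.x i, .z i, .z (i + 6)]
  | .z i => [.y i, .y (i + 1), .z (i + 3), .z (i + 4)]

def isX : Vtx → Bool | .x _ => true | _ => false
def isY : Vtx → Bool | .y _ => true | _ => false
def isZ : Vtx → Bool | .z _ => true | _ => false

def allv : List Vtx :=
  (List.range 7).flatMap fun n => [Vtx.x n, Vtx.y n, Vtx.z n]

lemma mem_allv : ∀ v : Vtx, v ∈ allv := by decide

lemma nbrs_complete : ∀ a b : Vtx, paperGraph.Adj a b → b ∈ nbrs a := by decide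

lemma isX_iff : ∀ v : Vtx, isX v = true ↔ v ∈ Xset := by
  intro v; cases v <;> simp [isX, Xset]

lemma isY_iff : ∀ v : Vtx, isY v = true ↔ v ∈ Yset := by
  intro v; cases v <;> simp [isY, Yset]

lemma isZ_iff : ∀ v : Vtx, isZ v = true ↔ v ∈ Zset := by
  intro v; cases v <;> simp [isZ, Zset]

def pairY (a b c d e : Vtx) : Bool :=
  (isY a && isY b) || (isY a && isY c) || (isY a && isY d) || (isY a && isY e) ||
  (isY b && isY c) || (isY b && isY d) || (isY b && isY e) ||
  (isY c && isY d) || (isY c && isY e) || (isY d && isY e)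

def goodB (a b c d e : Vtx) : Bool :=
  [a, b, c, d, e].any isX && [a, b, c, d, e].any isZ && pairY a b c d e

set_option maxRecDepth 100000 in
lemma key : ∀ a ∈ allv, ∀ b ∈ nbrs a, ∀ c ∈ nbrs b, ∀ d ∈ nbrs c, ∀ e ∈ nbrs d,
    paperGraph.Adj e a →
    (a ≠ b ∧ a ≠ c ∧ a ≠ d ∧ a ≠ e ∧ b ≠ c ∧ b ≠ d ∧ b ≠ e ∧ c ≠ d ∧ c ≠ e ∧ d ≠ e) →
    goodB a b c d e = true := by decide

lemma two_of (C : Set Vtx) (u v : Vtx) (hu : u ∈ C) (hv : v ∈ C) (hne : u ≠ v)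
    (hyu : u ∈ Yset) (hyv : v ∈ Yset) : 2 ≤ (C ∩ Yset).ncard := by
  have hsub : ({u, v} : Set Vtx) ⊆ C ∩ Yset := by
    intro w hw
    rcases hw with rfl | rfl
    · exact ⟨hu, hyu⟩
    · exact ⟨hv, hyv⟩
  calc 2 = ({u, v} : Set Vtx).ncard := (Set.ncard_pair hne).symm
    _ ≤ (C ∩ Yset).ncard := Set.ncard_le_ncard hsub (Set.toFinite _)

/-- every 5-cycle of the example graph meets `X` and `Z`, and
contains at least two vertices of `Y`. -/
theorem stmt12 (C : Set Vtx) (hC : IsCycleSet paperGraph C) (h5 : C.ncard = 5) :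
    (C ∩ Xset).Nonempty ∧ (C ∩ Zset).Nonempty ∧ 2 ≤ (C ∩ Yset).ncard := by
  obtain ⟨m, c, hm3, hinj, hadj, hCr⟩ := hC
  have hm : m = 5 := by
    have h1 : Nat.card (ZMod m) = 5 := by
      rw [← Nat.card_range_of_injective hinj, Nat.card_coe_set_eq, ← hCr, h5]
    simpa [Nat.card_zmod] using h1
  subst hm
  set a := c 0 with ha
  set b := c 1 with hb
  set c2 := c 2 with hc2
  set d := c 3 with hd
  set e := c 4 with he
  have hmem : ∀ i : ZMod 5, c i ∈ C := by
    intro i; rw [hCr]; exact ⟨i, rfl⟩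
  have hne : ∀ i j : ZMod 5, i ≠ j → c i ≠ c j := fun i j h hc => h (hinj hc)
  have hea : paperGraph.Adj e a := by
    have := hadj 4
    simpa [show (4 + 1 : ZMod 5) = 0 by decide] using this
  have hgood : goodB a b c2 d e = true := by
    have m1 : b ∈ nbrs a := nbrs_complete a b (hadj 0)
    have m2 : c2 ∈ nbrs b := nbrs_complete b c2 (hadj 1)
    have m3 : d ∈ nbrs c2 := nbrs_complete c2 d (hadj 2)
    have m4 : e ∈ nbrs d := nbrs_complete d e (hadj 3)
    exact key a (mem_allv a) b m1 c2 m2 d m3 e m4 hea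
      ⟨hne 0 1 (by decide), hne 0 2 (by decide), hne 0 3 (by decide), hne 0 4 (by decide),
       hne 1 2 (by decide), hne 1 3 (by decide), hne 1 4 (by decide),
       hne 2 3 (by decide), hne 2 4 (by decide), hne 3 4 (by decide)⟩
  rw [goodB, Bool.and_eq_true, Bool.and_eq_true] at hgood
  obtain ⟨⟨hx, hz⟩, hy⟩ := hgood
  refine ⟨?_, ?_, ?_⟩
  · simp only [List.any_eq_true, List.mem_cons, List.not_mem_nil, or_false] at hx
    obtain ⟨v, hv, hvx⟩ := hx
    rcases hv with rfl | rfl | rfl | rfl | rfl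
    · exact ⟨a, hmem 0, (isX_iff _).mp hvx⟩
    · exact ⟨b, hmem 1, (isX_iff _).mp hvx⟩
    · exact ⟨c2, hmem 2, (isX_iff _).mp hvx⟩
    · exact ⟨d, hmem 3, (isX_iff _).mp hvx⟩
    · exact ⟨e, hmem 4, (isX_iff _).mp hvx⟩
  · simp only [List.any_eq_true, List.mem_cons, List.not_mem_nil, or_false] at hz
    obtain ⟨v, hv, hvz⟩ := hz
    rcases hv with rfl | rfl | rfl | rfl | rfl
    · exact ⟨a, hmem 0, (isZ_iff _).mp hvz⟩
    · exact ⟨b, hmem 1, (isZ_iff _).mp hvz⟩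
    · exact ⟨c2, hmem 2, (isZ_iff _).mp hvz⟩
    · exact ⟨d, hmem 3, (isZ_iff _).mp hvz⟩
    · exact ⟨e, hmem 4, (isZ_iff _).mp hvz⟩
  · simp only [pairY, Bool.or_eq_true, Bool.and_eq_true] at hy
    rcases hy with ((((((((⟨h1, h2⟩ | ⟨h1, h2⟩) | ⟨h1, h2⟩) | ⟨h1, h2⟩) | ⟨h1, h2⟩) | ⟨h1, h2⟩) | ⟨h1, h2⟩) | ⟨h1, h2⟩) | ⟨h1, h2⟩) | ⟨h1, h2⟩
    · exact two_of C a b (hmem 0) (hmem 1) (hne 0 1 (by decide)) ((isY_iff _).mp h1) ((isY_iff _).mp h2)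
    · exact two_of C a c2 (hmem 0) (hmem 2) (hne 0 2 (by decide)) ((isY_iff _).mp h1) ((isY_iff _).mp h2)
    · exact two_of C a d (hmem 0) (hmem 3) (hne 0 3 (by decide)) ((isY_iff _).mp h1) ((isY_iff _).mp h2)
    · exact two_of C a e (hmem 0) (hmem 4) (hne 0 4 (by decide)) ((isY_iff _).mp h1) ((isY_iff _).mp h2)
    · exact two_of C b c2 (hmem 1) (hmem 2) (hne 1 2 (by decide)) ((isY_iff _).mp h1) ((isY_iff _).mp h2)
    · exact two_of C b d (hmem 1) (hmem 3) (hne 1 3 (by decide)) ((isY_iff _).mp h1) ((isY_iff _).mp h2)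
    · exact two_of C b e (hmem 1) (hmem 4) (hne 1 4 (by decide)) ((isY_iff _).mp h1) ((isY_iff _).mp h2)
    · exact two_of C c2 d (hmem 2) (hmem 3) (hne 2 3 (by decide)) ((isY_iff _).mp h1) ((isY_iff _).mp h2)
    · exact two_of C c2 e (hmem 2) (hmem 4) (hne 2 4 (by decide)) ((isY_iff _).mp h1) ((isY_iff _).mp h2)
    · exact two_of C d e (hmem 3) (hmem 4) (hne 3 4 (by decide)) ((isY_iff _).mp h1) ((isY_iff _).mp h2)
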